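/- Let ω be a normalized continuous 2-cocycle on H, let n ∈ ℤ, and let f, g : 𝕋 × H → ℂ be continuous, compactly supported and n-homogeneous. Then for all γ ∈ H, ∫_H ∫_𝕋 f(r,η) · g(r⁻¹ · ω(η,η⁻¹)⁻¹ · ω(η⁻¹,γ), η⁻¹γ) dr dμ(η) = ∫_H f(1,η) · g(1,η⁻¹γ) · ω(η,η⁻¹γ)^n dμ(η), where values of ω are regarded as complex numbers. -/

import Mathlib

open MeasureTheory

noncomputable instance : MeasurableSpace Circle := borel Circle
instance : BorelSpace Circle := ⟨rfl⟩

/-- Let `H` be a locally compact second-countable Hausdorff group with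
left Haar measure `μ`, `τ` the normalized Haar probability measure on the circle `𝕋`,
and `ω` a normalized continuous 2-cocycle on `H`.  Let `n ∈ ℤ` and let
`f, g : 𝕋 × H → ℂ` be continuous, compactly supported and `n`-homogeneous.  Then for all
`γ ∈ H`,
`∫_H ∫_𝕋 f (r, η) g (r⁻¹ ω(η,η⁻¹)⁻¹ ω(η⁻¹,γ), η⁻¹ γ) dr dμ(η)
  = ∫_H f (1, η) g (1, η⁻¹ γ) ω(η, η⁻¹ γ)^n dμ(η)`. -/
theorem convolution_at_one_eq_twisted_convolution
    {H : Type*} [Group H] [TopologicalSpace H] [IsTopologicalGroup H]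
    [LocallyCompactSpace H] [SecondCountableTopology H] [T2Space H]
    [MeasurableSpace H] [BorelSpace H]
    (μ : Measure H) [μ.IsHaarMeasure]
    (τ : Measure Circle) [τ.IsHaarMeasure] [IsProbabilityMeasure τ]
    (ω : H → H → Circle) (hω_cont : Continuous fun p : H × H => ω p.1 p.2)
    (hω_cocycle : ∀ η γ ξ : H, ω η γ * ω (η * γ) ξ = ω γ ξ * ω η (γ * ξ))
    (hω_norm : ∀ γ : H, ω 1 γ = 1 ∧ ω γ 1 = 1)
    (n : ℤ) (f g : Circle × H → ℂ)
    (hf : Continuous f) (hfsupp : HasCompactSupport f)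
    (hfhom : ∀ (s t : Circle) (γ : H), f (s * t, γ) = (s : ℂ) ^ (-n) * f (t, γ))
    (hg : Continuous g) (hgsupp : HasCompactSupport g)
    (hghom : ∀ (s t : Circle) (γ : H), g (s * t, γ) = (s : ℂ) ^ (-n) * g (t, γ)) :
    ∀ γ : H,
      (∫ η, ∫ r : Circle,
          f (r, η) * g (r⁻¹ * (ω η η⁻¹)⁻¹ * ω η⁻¹ γ, η⁻¹ * γ) ∂τ ∂μ) =
        ∫ η, f (1, η) * g (1, η⁻¹ * γ) * (ω η (η⁻¹ * γ) : ℂ) ^ n ∂μ := by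
  intro γ
  refine integral_congr_ae (Filter.Eventually.of_forall fun η => ?_)
  have key : ω η η⁻¹ = ω η⁻¹ γ * ω η (η⁻¹ * γ) := by
    have h := hω_cocycle η η⁻¹ γ
    simpa [(hω_norm γ).1] using h
  have hc : ∀ r : Circle, r⁻¹ * (ω η η⁻¹)⁻¹ * ω η⁻¹ γ = (r * ω η (η⁻¹ * γ))⁻¹ := by
    intro r
    rw [key, mul_inv, mul_inv]
    rw [mul_comm (ω η⁻¹ γ)⁻¹ (ω η (η⁻¹ * γ))⁻¹, ← mul_assoc, mul_assoc,
      inv_mul_cancel, mul_one]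
  have hconst : ∀ r : Circle,
      f (r, η) * g (r⁻¹ * (ω η η⁻¹)⁻¹ * ω η⁻¹ γ, η⁻¹ * γ)
        = f (1, η) * g (1, η⁻¹ * γ) * ((ω η (η⁻¹ * γ) : ℂ)) ^ n := by
    intro r
    have hr : (r : ℂ) ≠ 0 := Circle.coe_ne_zero r
    have h1 : f (r, η) = (r : ℂ) ^ (-n) * f (1, η) := by
      simpa using hfhom r 1 η
    have h2 : g (r⁻¹ * (ω η η⁻¹)⁻¹ * ω η⁻¹ γ, η⁻¹ * γ)
        = ((r⁻¹ * (ω η η⁻¹)⁻¹ * ω η⁻¹ γ : Circle) : ℂ) ^ (-n) * g (1, η⁻¹ * γ) := by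
      simpa using hghom (r⁻¹ * (ω η η⁻¹)⁻¹ * ω η⁻¹ γ) 1 (η⁻¹ * γ)
    rw [h1, h2, hc r]
    have h3 : (((r * ω η (η⁻¹ * γ))⁻¹ : Circle) : ℂ) ^ (-n)
        = (r : ℂ) ^ n * ((ω η (η⁻¹ * γ) : ℂ)) ^ n := by
      push_cast
      rw [inv_zpow, zpow_neg, inv_inv, mul_zpow]
    rw [h3]
    have h4 : (r : ℂ) ^ (-n) * (r : ℂ) ^ n = 1 := by
      rw [zpow_neg]
      exact inv_mul_cancel₀ (zpow_ne_zero _ hr)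
    calc (r : ℂ) ^ (-n) * f (1, η) * ((r : ℂ) ^ n * (ω η (η⁻¹ * γ) : ℂ) ^ n * g (1, η⁻¹ * γ))
        = ((r : ℂ) ^ (-n) * (r : ℂ) ^ n) * (f (1, η) * g (1, η⁻¹ * γ) * (ω η (η⁻¹ * γ) : ℂ) ^ n) := by ring
      _ = f (1, η) * g (1, η⁻¹ * γ) * (ω η (η⁻¹ * γ) : ℂ) ^ n := by rw [h4, one_mul]
  simp_rw [hconst]
  simp
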